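/- In a directed graph, if every vertex on a directed path from j to i other than the endpoints is distinct from both i and j, and the path from j to i is a shortest path among all pairs of distinct vertices sharing the same identifier, then all vertices on the path have pairwise distinct identifiers except possibly the pair (i, j). -/

import Mathlib

/-- In a directed graph with a labeling `id : V → L`, suppose `p` is a directed path of
length `m` from `j` to `i`, where `i ≠ j` and `id i = id j`, every vertex of the path
other than the endpoints is distinct from both `i` and `j`, and `m` is minimal among the
lengths of directed paths between any pair of distinct vertices sharing the same
identifier.  Then all vertices on the path have pairwise distinct identifiers, except for
the endpoint pair `(j, i)`. -/
theorem stmt8 {V L : Type*} (E : V → V → Prop) (idf : V → L) (i j : V) (hij : i ≠ j)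
    (hid : idf i = idf j) (m : ℕ) (p : Fin (m + 1) → V)
    (hp0 : p 0 = j) (hpm : p (Fin.last m) = i)
    (hstep : ∀ a : Fin m, E (p a.castSucc) (p a.succ))
    (hinternal : ∀ a : Fin (m + 1), a ≠ 0 → a ≠ Fin.last m → p a ≠ i ∧ p a ≠ j)
    (hmin : ∀ (m' : ℕ) (u v : V) (q : Fin (m' + 1) → V), u ≠ v → idf u = idf v →
      q 0 = u → q (Fin.last m') = v →
      (∀ a : Fin m', E (q a.castSucc) (q a.succ)) → m ≤ m') :
    ∀ a b : Fin (m + 1), a ≠ b → idf (p a) = idf (p b) →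
      (a = 0 ∧ b = Fin.last m) ∨ (b = 0 ∧ a = Fin.last m) := by
  have key : ∀ a b : Fin (m + 1), (a : ℕ) < (b : ℕ) → idf (p a) = idf (p b) →
      (a : ℕ) = 0 ∧ (b : ℕ) = m := by
    intro a b hab hidab
    by_contra hcon
    have ha' := a.isLt
    have hb' := b.isLt
    have hd : (b : ℕ) - (a : ℕ) < m := by omega
    by_cases hpe : p a = p b
    · -- splice out the cycle: path of length m - (b - a) from j to i
      set d : ℕ := (b : ℕ) - (a : ℕ) with hddef
      have hd1 : 1 ≤ d := by omega
      set m' : ℕ := m - d with hm'def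
      set q : Fin (m' + 1) → V := fun k =>
        if (k : ℕ) ≤ (a : ℕ) then p ⟨(k : ℕ), by omega⟩ else p ⟨(k : ℕ) + d, by omega⟩
        with hqdef
      have hq0 : q 0 = j := by
        rw [hqdef]
        simp only [Fin.val_zero]
        refine (if_pos (Nat.zero_le _)).trans ?_
        rw [← hp0]
        congr 1
      have hqlast : q (Fin.last m') = i := by
        rw [hqdef]
        simp only [Fin.val_last]
        by_cases hbm : (b : ℕ) = m
        · have ham : m' = (a : ℕ) := by omega
          rw [if_pos (by omega)]
          have : (⟨m', by omega⟩ : Fin (m + 1)) = a := by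
            apply Fin.ext; simp [ham]
          rw [this, hpe, ← hpm]
          congr 1
          apply Fin.ext; simp [hbm]
        · rw [if_neg (by omega)]
          rw [← hpm]
          congr 1
          apply Fin.ext
          simp only [Fin.val_last]
          omega
      have hqstep : ∀ k : Fin m', E (q k.castSucc) (q k.succ) := by
        intro k
        have hk := k.isLt
        rw [hqdef]
        simp only [Fin.coe_castSucc, Fin.val_succ]
        rcases lt_trichotomy (k : ℕ) (a : ℕ) with h1 | h1 | h1
        · rw [if_pos (by omega), if_pos (by omega)]
          have := hstep ⟨(k : ℕ), by omega⟩
          simpa [Fin.castSucc, Fin.succ, Fin.castAdd, Fin.castLE] using this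
        · rw [if_pos (by omega), if_neg (by omega)]
          have hblt : (b : ℕ) < m := by omega
          have := hstep ⟨(b : ℕ), hblt⟩
          have e1 : (⟨(k : ℕ), by omega⟩ : Fin (m + 1)) = a := by
            apply Fin.ext; simp [h1]
          rw [e1, hpe]
          have e2 : (⟨(k : ℕ) + 1 + d, by omega⟩ : Fin (m + 1)) =
              (⟨(b : ℕ), hblt⟩ : Fin m).succ := by
            apply Fin.ext; simp [Fin.succ]; omega
          have e3 : b = (⟨(b : ℕ), hblt⟩ : Fin m).castSucc := by
            apply Fin.ext; simp [Fin.castSucc, Fin.castAdd, Fin.castLE]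
          rw [e2]
          rw [show p b = p ((⟨(b : ℕ), hblt⟩ : Fin m).castSucc) from congrArg p e3]
          exact this
        · rw [if_neg (by omega), if_neg (by omega)]
          have hkd : (k : ℕ) + d < m := by omega
          have this2 := hstep ⟨(k : ℕ) + d, hkd⟩
          have e1 : (⟨(k : ℕ) + d, hkd⟩ : Fin m).castSucc =
              (⟨(k : ℕ) + d, by omega⟩ : Fin (m + 1)) := by
            apply Fin.ext; simp
          have e2 : (⟨(k : ℕ) + d, hkd⟩ : Fin m).succ =
              (⟨(k : ℕ) + 1 + d, by omega⟩ : Fin (m + 1)) := by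
            apply Fin.ext; simp only [Fin.val_succ]; omega
          rw [e1, e2] at this2
          exact this2
      have := hmin m' j i q (Ne.symm hij) hid.symm hq0 hqlast hqstep
      omega
    · -- subpath from p a to p b of length b - a
      set d : ℕ := (b : ℕ) - (a : ℕ) with hddef
      set q : Fin (d + 1) → V := fun k => p ⟨(a : ℕ) + (k : ℕ), by omega⟩ with hqdef
      have hq0 : q 0 = p a := by
        have hb2 : (⟨(a : ℕ) + (((0 : Fin (d+1))) : ℕ), by omega⟩ : Fin (m + 1)) = a := by
          apply Fin.ext; simp
        rw [hqdef]; exact congrArg p hb2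
      have hqlast : q (Fin.last d) = p b := by
        have hb2 : (⟨(a : ℕ) + ((Fin.last d : Fin (d+1)) : ℕ), by omega⟩ : Fin (m + 1)) = b := by
          apply Fin.ext; simp; omega
        rw [hqdef]; exact congrArg p hb2
      have hqstep : ∀ k : Fin d, E (q k.castSucc) (q k.succ) := by
        intro k
        have hk := k.isLt
        rw [hqdef]
        simp only [Fin.coe_castSucc, Fin.val_succ]
        have := hstep ⟨(a : ℕ) + (k : ℕ), by omega⟩
        simpa [Fin.castSucc, Fin.succ, Fin.castAdd, Fin.castLE, Nat.add_assoc]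
          using this
      have := hmin d (p a) (p b) q hpe hidab hq0 hqlast hqstep
      omega
  intro a b hne hidab
  rcases lt_trichotomy (a : ℕ) (b : ℕ) with h | h | h
  · obtain ⟨h1, h2⟩ := key a b h hidab
    exact Or.inl ⟨Fin.ext h1, Fin.ext (by simpa using h2)⟩
  · exact absurd (Fin.ext h) hne
  · obtain ⟨h1, h2⟩ := key b a h hidab.symm
    exact Or.inr ⟨Fin.ext h1, Fin.ext (by simpa using h2)⟩
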